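/- Let a, b, c, d : ℝ → ℝ be differentiable functions and let X be the vector field on ℝ⁴ given at the point (x,y,z,t) by X = a(t) e₁ + b(t) e₂ + c(t) e₃ + d(t) e₄. Then at every point, ∇̃_X X = a'(t) d(t) e₁ + d(t)(b'(t) − a(t)) e₂ + d(t)(c'(t) − b(t)) e₃ + [d(t) d'(t) + b(t)(a(t) + c(t))] e₄. -/

import Mathlib

noncomputable section

/-- The left-invariant frame fields e₁,e₂,e₃,e₄ on ℝ⁴ (coordinates x,y,z,t = p 0,...,p 3). -/
def eVF (i : Fin 4) (p : Fin 4 → ℝ) : Fin 4 → ℝ :=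
  ![![1, 0, 0, 0],
    ![p 3, 1, 0, 0],
    ![(p 3) ^ 2 / 2, p 3, 1, 0],
    ![0, 0, 0, 1]] i

/-- The matrix of the metric g̃ at a point with last coordinate t. -/
def gMat (t : ℝ) : Matrix (Fin 4) (Fin 4) ℝ :=
  !![1, -t, t ^ 2 / 2, 0;
     -t, 1 + t ^ 2, -t * (1 + t ^ 2 / 2), 0;
     t ^ 2 / 2, -t * (1 + t ^ 2 / 2), 1 + t ^ 2 + t ^ 4 / 4, 0;
     0, 0, 0, 1]

/-- The metric g̃ as a bilinear form on each tangent space. -/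
def gMet (p X Y : Fin 4 → ℝ) : ℝ :=
  ∑ i, ∑ j, gMat (p 3) i j * X i * Y j

/-- Partial derivative in direction of the i-th coordinate. -/
def pd (i : Fin 4) (f : (Fin 4 → ℝ) → ℝ) (p : Fin 4 → ℝ) : ℝ :=
  deriv (fun s => f (Function.update p i s)) (p i)

/-- The Christoffel symbols Γᵏᵢⱼ of g̃. -/
def Chr (p : Fin 4 → ℝ) (k i j : Fin 4) : ℝ :=
  (1 / 2) * ∑ l, (gMat (p 3))⁻¹ k l *
    (pd i (fun q => gMat (q 3) j l) p + pd j (fun q => gMat (q 3) i l) p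
      - pd l (fun q => gMat (q 3) i j) p)

/-- The Levi-Civita connection of g̃ in coordinates. -/
def nabla (X Y : (Fin 4 → ℝ) → (Fin 4 → ℝ)) (p : Fin 4 → ℝ) : Fin 4 → ℝ :=
  fun k => (∑ i, X p i * pd i (fun q => Y q k) p)
    + ∑ i, ∑ j, Chr p k i j * X p i * Y p j

/-- Lie bracket of vector fields on ℝ⁴. -/
def bracket (X Y : (Fin 4 → ℝ) → (Fin 4 → ℝ)) (p : Fin 4 → ℝ) : Fin 4 → ℝ :=
  fderiv ℝ Y p (X p) - fderiv ℝ X p (Y p)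

/-- The curvature tensor R̃(X,Y)Z = ∇̃_X ∇̃_Y Z − ∇̃_Y ∇̃_X Z − ∇̃_{[X,Y]} Z. -/
def Riem (X Y Z : (Fin 4 → ℝ) → (Fin 4 → ℝ)) (p : Fin 4 → ℝ) : Fin 4 → ℝ :=
  nabla X (nabla Y Z) p - nabla Y (nabla X Z) p - nabla (bracket X Y) Z p

/-! ### Auxiliary lemmas -/

/-- The inverse of the metric matrix. -/
def gInv (t : ℝ) : Matrix (Fin 4) (Fin 4) ℝ :=
  !![1+t^2+t^4/4, t+t^3/2, t^2/2, 0;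
     t+t^3/2, 1+t^2, t, 0;
     t^2/2, t, 1, 0;
     0, 0, 0, 1]

/-- The entrywise derivative of the metric matrix. -/
def gMat' (t : ℝ) : Matrix (Fin 4) (Fin 4) ℝ :=
  !![0, -1, t, 0;
     -1, 2*t, -1-3*t^2/2, 0;
     t, -1-3*t^2/2, 2*t+t^3, 0;
     0, 0, 0, 0]

lemma gMat_inv (t : ℝ) : (gMat t)⁻¹ = gInv t := by
  apply Matrix.inv_eq_right_inv
  ext i j
  fin_cases i <;> fin_cases j <;>
    simp [gMat, gInv, Matrix.mul_apply, Fin.sum_univ_four] <;> ring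

lemma hasDerivAt_gMat (j l : Fin 4) (x : ℝ) :
    HasDerivAt (fun t => gMat t j l) (gMat' x j l) x := by
  have hid : HasDerivAt (fun t : ℝ => t) 1 x := hasDerivAt_id x
  have h2 : HasDerivAt (fun t : ℝ => t ^ 2 / 2) x x := by
    simpa using (hasDerivAt_pow 2 x).div_const 2
  have h2' : HasDerivAt (fun t : ℝ => 1 + t ^ 2) (2 * x) x := by
    simpa using (hasDerivAt_pow 2 x).const_add 1
  have h3 : HasDerivAt (fun t : ℝ => -t * (1 + t ^ 2 / 2)) (-1 - 3 * x ^ 2 / 2) x := by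
    have := (hid.neg.mul (((hasDerivAt_pow 2 x).div_const 2).const_add 1))
    refine this.congr_deriv ?_
    simp; ring
  have h4 : HasDerivAt (fun t : ℝ => 1 + t ^ 2 + t ^ 4 / 4) (2 * x + x ^ 3) x := by
    have := h2'.add ((hasDerivAt_pow 4 x).div_const 4)
    refine this.congr_deriv ?_
    simp
  fin_cases j <;> fin_cases l <;>
    simp only [gMat, gMat', Matrix.cons_val', Matrix.cons_val_zero, Matrix.cons_val_one,
      Matrix.head_cons, Matrix.empty_val', Matrix.cons_val_fin_one, Matrix.head_fin_const,
      Fin.isValue, Matrix.cons_val_two, Matrix.cons_val_three, Matrix.tail_cons,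
      Matrix.of_apply] <;>
    first
      | exact hasDerivAt_const x _
      | exact hid.neg
      | exact h2
      | exact h2'
      | exact h3
      | exact h4

lemma deriv_gMat (j l : Fin 4) (x : ℝ) :
    deriv (fun t => gMat t j l) x = gMat' x j l := (hasDerivAt_gMat j l x).deriv

lemma pd_eq (i : Fin 4) (f : (Fin 4 → ℝ) → ℝ) (g : ℝ → ℝ)
    (hfg : ∀ q, f q = g (q 3)) (p : Fin 4 → ℝ) :
    pd i f p = if i = 3 then deriv g (p 3) else 0 := by
  rcases eq_or_ne i 3 with h | h
  · subst h
    rw [if_pos rfl]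
    unfold pd
    have : (fun s => f (Function.update p 3 s)) = g := by
      funext s; rw [hfg]; simp
    rw [this]
  · rw [if_neg h]
    unfold pd
    have : (fun s => f (Function.update p i s)) = fun _ => g (p 3) := by
      funext s; rw [hfg, Function.update_of_ne (Ne.symm h)]
    rw [this, deriv_const]

lemma Chr_eq (p : Fin 4 → ℝ) (k i j : Fin 4) : Chr p k i j =
    (1 / 2) * ∑ l, gInv (p 3) k l *
      ((if i = 3 then gMat' (p 3) j l else 0) + (if j = 3 then gMat' (p 3) i l else 0)
        - (if l = 3 then gMat' (p 3) i j else 0)) := by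
  unfold Chr
  rw [gMat_inv]
  congr 1
  refine Finset.sum_congr rfl fun l _ => ?_
  rw [pd_eq i _ (fun t => gMat t j l) (fun q => rfl) p,
      pd_eq j _ (fun t => gMat t i l) (fun q => rfl) p,
      pd_eq l _ (fun t => gMat t i j) (fun q => rfl) p]
  simp only [deriv_gMat]

/-- Christoffel symbol table. -/
def ChrF (t : ℝ) : Fin 4 → Matrix (Fin 4) (Fin 4) ℝ :=
  ![!![0,0,0,-t/2; 0,0,0,(t^2/2-1)/2; 0,0,0,0; -t/2,(t^2/2-1)/2,0,0],
    !![0,0,0,-1/2; 0,0,0,0; 0,0,0,(t^2/2-1)/2; -1/2,0,(t^2/2-1)/2,0],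
    !![0,0,0,0; 0,0,0,-1/2; 0,0,0,t/2; 0,-1/2,t/2,0],
    !![0,1/2,-t/2,0; 1/2,-t,1/2+3*t^2/4,0; -t/2,1/2+3*t^2/4,-t-t^3/2,0; 0,0,0,0]]

lemma fmk0 {h} : (⟨0, h⟩ : Fin 4) = 0 := rfl
lemma fmk1 {h} : (⟨1, h⟩ : Fin 4) = 1 := rfl
lemma fmk2 {h} : (⟨2, h⟩ : Fin 4) = 2 := rfl
lemma fmk3 {h} : (⟨3, h⟩ : Fin 4) = 3 := rfl

set_option maxHeartbeats 4000000 in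
lemma Chr_val (p : Fin 4 → ℝ) (k i j : Fin 4) : Chr p k i j = ChrF (p 3) k i j := by
  rw [Chr_eq]
  fin_cases k <;> fin_cases i <;> fin_cases j <;>
    simp (config := { decide := true }) only [fmk0, fmk1, fmk2, fmk3, Fin.sum_univ_four,
      gInv, gMat', ChrF,
      Matrix.cons_val', Matrix.cons_val_zero, Matrix.cons_val_one, Matrix.head_cons,
      Matrix.empty_val', Matrix.cons_val_fin_one, Matrix.head_fin_const, Fin.isValue,
      Matrix.cons_val_two, Matrix.cons_val_three, Matrix.tail_cons, Matrix.of_apply,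
      if_true, if_false, mul_zero, zero_mul, mul_one, one_mul, add_zero, zero_add,
      sub_zero, zero_sub, mul_neg, neg_zero] <;> ring

set_option maxHeartbeats 4000000 in
/-- For X = a(t)e₁ + b(t)e₂ + c(t)e₃ + d(t)e₄,
∇̃_X X = a'd e₁ + d(b'−a) e₂ + d(c'−b) e₃ + [dd' + b(a+c)] e₄. -/
theorem nil4_nabla_XX (a b c d : ℝ → ℝ)
    (ha : Differentiable ℝ a) (hb : Differentiable ℝ b)
    (hc : Differentiable ℝ c) (hd : Differentiable ℝ d) :
    ∀ p : Fin 4 → ℝ,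
      nabla
        (fun q => a (q 3) • eVF 0 q + b (q 3) • eVF 1 q
          + c (q 3) • eVF 2 q + d (q 3) • eVF 3 q)
        (fun q => a (q 3) • eVF 0 q + b (q 3) • eVF 1 q
          + c (q 3) • eVF 2 q + d (q 3) • eVF 3 q) p
      = (deriv a (p 3) * d (p 3)) • eVF 0 p
        + (d (p 3) * (deriv b (p 3) - a (p 3))) • eVF 1 p
        + (d (p 3) * (deriv c (p 3) - b (p 3))) • eVF 2 p
        + (d (p 3) * deriv d (p 3) + b (p 3) * (a (p 3) + c (p 3))) • eVF 3 p := by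
  intro p
  have h2 : ∀ x : ℝ, HasDerivAt (fun t : ℝ => t ^ 2 / 2) x x := fun x => by
    simpa using (hasDerivAt_pow 2 x).div_const 2
  have e0 : ∀ q : Fin 4 → ℝ,
      (a (q 3) • eVF 0 q + b (q 3) • eVF 1 q + c (q 3) • eVF 2 q + d (q 3) • eVF 3 q) 0
        = a (q 3) + b (q 3) * q 3 + c (q 3) * ((q 3) ^ 2 / 2) := by
    intro q; simp [eVF]
  have e1 : ∀ q : Fin 4 → ℝ,
      (a (q 3) • eVF 0 q + b (q 3) • eVF 1 q + c (q 3) • eVF 2 q + d (q 3) • eVF 3 q) 1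
        = b (q 3) + c (q 3) * q 3 := by
    intro q; simp [eVF]
  have e2 : ∀ q : Fin 4 → ℝ,
      (a (q 3) • eVF 0 q + b (q 3) • eVF 1 q + c (q 3) • eVF 2 q + d (q 3) • eVF 3 q) 2
        = c (q 3) := by
    intro q; simp [eVF]
  have e3 : ∀ q : Fin 4 → ℝ,
      (a (q 3) • eVF 0 q + b (q 3) • eVF 1 q + c (q 3) • eVF 2 q + d (q 3) • eVF 3 q) 3
        = d (q 3) := by
    intro q; simp [eVF]
  have Hg0 : deriv (fun x : ℝ => a x + b x * x + c x * (x ^ 2 / 2)) (p 3)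
      = deriv a (p 3) + (deriv b (p 3) * p 3 + b (p 3) * 1)
        + (deriv c (p 3) * ((p 3) ^ 2 / 2) + c (p 3) * p 3) :=
    ((((ha (p 3)).hasDerivAt).add
        (((hb (p 3)).hasDerivAt).mul (hasDerivAt_id (p 3)))).add
        (((hc (p 3)).hasDerivAt).mul (h2 (p 3)))).deriv
  have Hg1 : deriv (fun x : ℝ => b x + c x * x) (p 3)
      = deriv b (p 3) + (deriv c (p 3) * p 3 + c (p 3) * 1) :=
    (((hb (p 3)).hasDerivAt).add
        (((hc (p 3)).hasDerivAt).mul (hasDerivAt_id (p 3)))).deriv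
  have hp0 : ∀ i, pd i (fun q => a (q 3) + b (q 3) * q 3 + c (q 3) * (q 3 ^ 2 / 2)) p
      = if i = 3 then deriv (fun x : ℝ => a x + b x * x + c x * (x ^ 2 / 2)) (p 3) else 0 :=
    fun i => pd_eq i _ (fun x : ℝ => a x + b x * x + c x * (x ^ 2 / 2)) (fun q => rfl) p
  have hp1 : ∀ i, pd i (fun q => b (q 3) + c (q 3) * q 3) p
      = if i = 3 then deriv (fun x : ℝ => b x + c x * x) (p 3) else 0 :=
    fun i => pd_eq i _ (fun x : ℝ => b x + c x * x) (fun q => rfl) p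
  have hp2 : ∀ i, pd i (fun q => c (q 3)) p
      = if i = 3 then deriv c (p 3) else 0 :=
    fun i => pd_eq i _ c (fun q => rfl) p
  have hp3 : ∀ i, pd i (fun q => d (q 3)) p
      = if i = 3 then deriv d (p 3) else 0 :=
    fun i => pd_eq i _ d (fun q => rfl) p
  funext k
  fin_cases k
  · simp only [fmk0, fmk1, fmk2, fmk3]
    simp only [nabla, Fin.sum_univ_four, e0, e1, e2, e3]
    simp only [hp0, hp1, hp2, hp3, Chr_val]
    simp (config := { decide := true }) only [ChrF, eVF, fmk0, fmk1, fmk2, fmk3,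
      Matrix.cons_val', Matrix.cons_val_zero, Matrix.cons_val_one, Matrix.head_cons,
      Matrix.empty_val', Matrix.cons_val_fin_one, Matrix.head_fin_const, Fin.isValue,
      Matrix.cons_val_two, Matrix.cons_val_three, Matrix.tail_cons, Matrix.of_apply,
      if_true, if_false, Pi.add_apply, Pi.smul_apply, smul_eq_mul]
    rw [Hg0]
    ring
  · simp only [fmk0, fmk1, fmk2, fmk3]
    simp only [nabla, Fin.sum_univ_four, e0, e1, e2, e3]
    simp only [hp0, hp1, hp2, hp3, Chr_val]
    simp (config := { decide := true }) only [ChrF, eVF, fmk0, fmk1, fmk2, fmk3,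
      Matrix.cons_val', Matrix.cons_val_zero, Matrix.cons_val_one, Matrix.head_cons,
      Matrix.empty_val', Matrix.cons_val_fin_one, Matrix.head_fin_const, Fin.isValue,
      Matrix.cons_val_two, Matrix.cons_val_three, Matrix.tail_cons, Matrix.of_apply,
      if_true, if_false, Pi.add_apply, Pi.smul_apply, smul_eq_mul]
    rw [Hg1]
    ring
  · simp only [fmk0, fmk1, fmk2, fmk3]
    simp only [nabla, Fin.sum_univ_four, e0, e1, e2, e3]
    simp only [hp0, hp1, hp2, hp3, Chr_val]
    simp (config := { decide := true }) only [ChrF, eVF, fmk0, fmk1, fmk2, fmk3,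
      Matrix.cons_val', Matrix.cons_val_zero, Matrix.cons_val_one, Matrix.head_cons,
      Matrix.empty_val', Matrix.cons_val_fin_one, Matrix.head_fin_const, Fin.isValue,
      Matrix.cons_val_two, Matrix.cons_val_three, Matrix.tail_cons, Matrix.of_apply,
      if_true, if_false, Pi.add_apply, Pi.smul_apply, smul_eq_mul]
    ring
  · simp only [fmk0, fmk1, fmk2, fmk3]
    simp only [nabla, Fin.sum_univ_four, e0, e1, e2, e3]
    simp only [hp0, hp1, hp2, hp3, Chr_val]
    simp (config := { decide := true }) only [ChrF, eVF, fmk0, fmk1, fmk2, fmk3,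
      Matrix.cons_val', Matrix.cons_val_zero, Matrix.cons_val_one, Matrix.head_cons,
      Matrix.empty_val', Matrix.cons_val_fin_one, Matrix.head_fin_const, Fin.isValue,
      Matrix.cons_val_two, Matrix.cons_val_three, Matrix.tail_cons, Matrix.of_apply,
      if_true, if_false, Pi.add_apply, Pi.smul_apply, smul_eq_mul]
    ring
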